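/- For a polynomial 𝒫 ∈ ℂ[Z] of degree n, define the ambiguity polynomial A_𝒫(z,w) = Σ_{m=0}^n (1/m!)·𝒫^{(m)}(z)·𝒫*^{(m)}(w), where 𝒫*(w) = conj(𝒫(conj w)). Then for polynomials 𝒫, 𝒬, A_𝒫 = A_𝒬 if and only if there exists a unimodular constant c with 𝒫 = c·𝒬. -/

import Mathlib

open Polynomial

/-- The ambiguity function `A_𝒫(z,w) = Σ_{m=0}^{deg 𝒫} (1/m!) 𝒫^{(m)}(z) 𝒫*^{(m)}(w)`,
where `𝒫*` has conjugated coefficients. -/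
noncomputable def ambPoly (P : Polynomial ℂ) (z w : ℂ) : ℂ :=
  ∑ m ∈ Finset.range (P.natDegree + 1),
    (1 / (Nat.factorial m : ℂ)) * ((derivative^[m] P).eval z) *
      ((derivative^[m] (P.map (starRingEnd ℂ))).eval w)

private lemma amb_ext (P : Polynomial ℂ) {n : ℕ} (hn : P.natDegree ≤ n) (z w : ℂ) :
    ambPoly P z w = ∑ m ∈ Finset.range (n + 1),
      (1 / (Nat.factorial m : ℂ)) * ((derivative^[m] P).eval z) *
        ((derivative^[m] (P.map (starRingEnd ℂ))).eval w) := by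
  unfold ambPoly
  refine Finset.sum_subset (Finset.range_subset_range.2 (by omega)) ?_
  intro m _ hm
  simp only [Finset.mem_range, not_lt] at hm
  rw [iterate_derivative_eq_zero (by omega : P.natDegree < m)]
  simp

private noncomputable def ambAux (n : ℕ) (z : ℂ) (R : Polynomial ℂ) : Polynomial ℂ :=
  ∑ m ∈ Finset.range (n + 1),
    Polynomial.C ((1 / (Nat.factorial m : ℂ)) * ((derivative^[m] R).eval z)) *
      (derivative^[m] (R.map (starRingEnd ℂ)))

private lemma key (P Q : Polynomial ℂ)
    (h : ∀ z w : ℂ, ambPoly P z w = ambPoly Q z w) {n : ℕ}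
    (hP : P.natDegree ≤ n) (hQ : Q.natDegree ≤ n) :
    (starRingEnd ℂ (P.coeff n)) • P = (starRingEnd ℂ (Q.coeff n)) • Q := by
  apply Polynomial.funext
  intro z
  simp only [eval_smul, smul_eq_mul]
  have main : ∀ R : Polynomial ℂ, R.natDegree ≤ n →
      (ambAux n z R).coeff n = R.eval z * starRingEnd ℂ (R.coeff n) := by
    intro R hR
    unfold ambAux
    rw [Polynomial.finset_sum_coeff, Finset.sum_eq_single 0]
    · simp [Polynomial.coeff_C_mul, Polynomial.coeff_map]
    · intro m _ hm
      rw [Polynomial.coeff_C_mul, Polynomial.coeff_iterate_derivative,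
        Polynomial.coeff_map,
        Polynomial.coeff_eq_zero_of_natDegree_lt (by omega : R.natDegree < n + m)]
      simp
    · simp
  have heval : ∀ (R : Polynomial ℂ), R.natDegree ≤ n → ∀ w : ℂ,
      (ambAux n z R).eval w = ambPoly R z w := by
    intro R hR w
    unfold ambAux
    rw [amb_ext R hR, Polynomial.eval_finset_sum]
    simp [mul_assoc]
  have hsum : ambAux n z P = ambAux n z Q :=
    Polynomial.funext (fun w => by rw [heval P hP w, heval Q hQ w]; exact h z w)
  have hco : (ambAux n z P).coeff n = (ambAux n z Q).coeff n := by rw [hsum]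
  rw [main P hP, main Q hQ] at hco
  rw [mul_comm, hco, mul_comm]

theorem stmt9 (P Q : Polynomial ℂ) :
    (∀ z w : ℂ, ambPoly P z w = ambPoly Q z w) ↔
      ∃ c : ℂ, ‖c‖ = 1 ∧ P = c • Q := by
  constructor
  · intro h
    by_cases hQ0 : Q = 0
    · subst hQ0
      refine ⟨1, by simp, ?_⟩
      by_cases hP0 : P = 0
      · simp [hP0]
      · exfalso
        have hk := key P 0 h (le_refl P.natDegree) (by simp)
        rw [smul_zero] at hk
        rcases smul_eq_zero.1 hk with h1 | h1
        · exact leadingCoeff_ne_zero.2 hP0 (by simpa using h1)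
        · exact hP0 h1
    · by_cases hP0 : P = 0
      · exfalso
        have hk := key Q P (fun z w => (h z w).symm) (le_refl Q.natDegree)
          (by rw [hP0]; simp)
        rw [hP0, smul_zero] at hk
        rcases smul_eq_zero.1 hk with h1 | h1
        · exact leadingCoeff_ne_zero.2 hQ0 (by simpa using h1)
        · exact hQ0 h1
      · set n := max P.natDegree Q.natDegree with hn
        have hPd : P.natDegree ≤ n := le_max_left _ _
        have hQd : Q.natDegree ≤ n := le_max_right _ _
        have hk := key P Q h hPd hQd
        have hcoeff : starRingEnd ℂ (P.coeff n) * P.coeff n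
            = starRingEnd ℂ (Q.coeff n) * Q.coeff n := by
          have := congrArg (fun p : Polynomial ℂ => p.coeff n) hk
          simpa [Polynomial.coeff_smul, smul_eq_mul] using this
        have habs : Complex.normSq (P.coeff n) = Complex.normSq (Q.coeff n) := by
          have h1 : starRingEnd ℂ (P.coeff n) * P.coeff n
              = (Complex.normSq (P.coeff n) : ℂ) := by
            rw [mul_comm]; exact Complex.mul_conj _
          have h2 : starRingEnd ℂ (Q.coeff n) * Q.coeff n
              = (Complex.normSq (Q.coeff n) : ℂ) := by
            rw [mul_comm]; exact Complex.mul_conj _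
          rw [h1, h2] at hcoeff
          exact_mod_cast hcoeff
        have hor : P.coeff n ≠ 0 ∨ Q.coeff n ≠ 0 := by
          rcases max_choice P.natDegree Q.natDegree with hc | hc
          · left; rw [hn, hc]; exact leadingCoeff_ne_zero.2 hP0
          · right; rw [hn, hc]; exact leadingCoeff_ne_zero.2 hQ0
        have hPn : P.coeff n ≠ 0 := by
          rcases hor with h1 | h1
          · exact h1
          · intro h0
            apply h1
            rw [← Complex.normSq_eq_zero, ← habs, h0, map_zero]
        have hQn : Q.coeff n ≠ 0 := by
          intro h0
          apply hPn
          rw [← Complex.normSq_eq_zero, habs, h0, map_zero]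
        set a := P.coeff n
        set b := Q.coeff n
        have ha : starRingEnd ℂ a ≠ 0 := by simpa using hPn
        have habs' : ‖a‖ = ‖b‖ := by
          rw [Complex.norm_def, Complex.norm_def, habs]
        refine ⟨starRingEnd ℂ b / starRingEnd ℂ a, ?_, ?_⟩
        · rw [norm_div, Complex.norm_conj, Complex.norm_conj, ← habs',
            div_self (norm_ne_zero_iff.2 hPn)]
        · rw [div_eq_inv_mul, ← smul_smul, ← hk, smul_smul,
            inv_mul_cancel₀ ha, one_smul]
  · rintro ⟨c, hc, rfl⟩
    intro z w
    have hc0 : c ≠ 0 := by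
      intro h0; rw [h0] at hc; simp at hc
    have hdeg : (c • Q).natDegree = Q.natDegree := by
      rw [Polynomial.smul_eq_C_mul, Polynomial.natDegree_C_mul hc0]
    have hcc : c * starRingEnd ℂ c = 1 := by
      rw [Complex.mul_conj]
      norm_cast
      rw [Complex.normSq_eq_norm_sq, hc]; norm_num
    unfold ambPoly
    rw [hdeg]
    apply Finset.sum_congr rfl
    intro m _
    rw [Polynomial.smul_eq_C_mul, Polynomial.map_mul, Polynomial.map_C,
      Polynomial.iterate_derivative_C_mul, Polynomial.iterate_derivative_C_mul]
    simp only [Polynomial.eval_mul, Polynomial.eval_C]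
    linear_combination (1 / (Nat.factorial m : ℂ) * ((derivative^[m] Q).eval z) *
      ((derivative^[m] (Q.map (starRingEnd ℂ))).eval w)) * hcc
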